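/- Under the Entropy Setup, with ρ̄ > 0, consider H(ρ,u) = η̃_m(ρ,ρu) as a function of the variables (ρ,u) with ρ > 0, u ∈ ℝ, where η̃_m(ρ,m) = η̌_m(ρ,m) − η̌_m(ρ̄,0). Then there exists a constant M > 0 depending only on γ such that |∂_ρ H(ρ,u)| ≤ Mρ^{θ−1} and |∂_u H(ρ,u)| ≤ M for all ρ > 0 and u ∈ ℝ. -/

import Mathlib

open MeasureTheory Real Set

noncomputable section

/-- The Lions–Perthame–Tadmor weak entropy
`η̌(ρ,m) = ∫_ℝ ½ s|s| [ρ^{2θ} − (m/ρ−s)²]_+^{(3−γ)/(2(γ−1))} ds`, with `2θ = γ−1`. -/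
def etaCheck (γ ρ m : ℝ) : ℝ :=
  ∫ s : ℝ, (1/2) * s * |s| *
    (max (ρ ^ (γ - 1) - (m / ρ - s) ^ (2:ℕ)) 0) ^ ((3 - γ) / (2 * (γ - 1)))

/-- The associated weak entropy flux
`q̌(ρ,m) = ∫_ℝ ½ s|s| (θs + (1−θ)m/ρ) [ρ^{2θ} − (m/ρ−s)²]_+^{(3−γ)/(2(γ−1))} ds`. -/
def qCheck (γ ρ m : ℝ) : ℝ :=
  ∫ s : ℝ, (1/2) * s * |s| * (((γ - 1)/2) * s + (1 - (γ - 1)/2) * (m / ρ)) *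
    (max (ρ ^ (γ - 1) - (m / ρ - s) ^ (2:ℕ)) 0) ^ ((3 - γ) / (2 * (γ - 1)))

/-- Partial derivative `η̌_ρ` in the variables `(ρ,m)`. -/
def etaCheckRho (γ ρ m : ℝ) : ℝ := deriv (fun x => etaCheck γ x m) ρ

/-- Partial derivative `η̌_m` in the variables `(ρ,m)`. -/
def etaCheckM (γ ρ m : ℝ) : ℝ := deriv (fun y => etaCheck γ ρ y) m

/-- The modified entropy `η̃(ρ,m) = η̌(ρ,m) − η̌_ρ(ρ̄,0)(ρ−ρ̄) − η̌_m(ρ̄,0)m`. -/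
def etaTilde (γ ρbar ρ m : ℝ) : ℝ :=
  etaCheck γ ρ m - etaCheckRho γ ρbar 0 * (ρ - ρbar) - etaCheckM γ ρbar 0 * m

/-- The modified entropy flux
`q̃(ρ,m) = q̌(ρ,m) − η̌_ρ(ρ̄,0)m − η̌_m(ρ̄,0)(m²/ρ + p(ρ))`, `p(ρ) = κρ^γ`. -/
def qTilde (γ κ ρbar ρ m : ℝ) : ℝ :=
  qCheck γ ρ m - etaCheckRho γ ρbar 0 * m
    - etaCheckM γ ρbar 0 * (m ^ (2:ℕ) / ρ + κ * ρ ^ γ)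

/-- `η̃_ρ` in the variables `(ρ,m)`. -/
def etaTildeRho (γ ρbar ρ m : ℝ) : ℝ := deriv (fun x => etaTilde γ ρbar x m) ρ

/-- `η̃_m` in the variables `(ρ,m)`. -/
def etaTildeM (γ ρbar ρ m : ℝ) : ℝ := deriv (fun y => etaTilde γ ρbar ρ y) m

/-- `H(ρ,u) = η̃_m(ρ,ρu) = η̌_m(ρ,ρu) − η̌_m(ρ̄,0)` as a function of `(ρ,u)`. -/
def Hfun (γ ρbar ρ u : ℝ) : ℝ := etaCheckM γ ρ (ρ * u) - etaCheckM γ ρbar 0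


namespace HB

open Filter Topology Metric

/-- The exponent `(3−γ)/(2(γ−1))`. -/
def al (γ : ℝ) : ℝ := (3 - γ) / (2 * (γ - 1))

/-- The normalized profile `(max (1−y²) 0)^α`. -/
def g1 (γ y : ℝ) : ℝ := (max (1 - y ^ (2:ℕ)) 0) ^ (al γ)

variable {γ : ℝ}

lemma alpha_gt (hγ : 1 < γ) : -1 < al γ := by
  have hb : (0:ℝ) < 2 * (γ - 1) := by linarith
  rw [al, lt_div_iff₀ hb]; nlinarith

lemma alpha_ne (h3 : γ ≠ 3) (hγ : 1 < γ) : al γ ≠ 0 := by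
  apply div_ne_zero
  · intro h; exact h3 (by linarith [sub_eq_zero.mp h])
  · nlinarith

lemma g1_nonneg {y : ℝ} : 0 ≤ g1 γ y := Real.rpow_nonneg (le_max_right _ _) _

lemma g1_zero (hγ : 1 < γ) (h3 : γ ≠ 3) {y : ℝ} (hy : 1 ≤ |y|) : g1 γ y = 0 := by
  have h2 : 1 - y ^ (2:ℕ) ≤ 0 := by nlinarith [sq_abs y, abs_nonneg y]
  rw [g1, max_eq_right h2, Real.zero_rpow (alpha_ne h3 hγ)]

lemma g1_supp (hγ : 1 < γ) (h3 : γ ≠ 3) {y : ℝ} (h : g1 γ y ≠ 0) : |y| ≤ 1 := by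
  by_contra hc
  exact h (g1_zero hγ h3 (le_of_lt (lt_of_not_ge hc)))

lemma measurable_g1 : Measurable (g1 γ) := by
  have hm : Measurable fun y : ℝ => max (1 - y ^ (2:ℕ)) 0 :=
    (((continuous_const.sub (continuous_pow 2)).max continuous_const)).measurable
  have heq : g1 γ = fun y => if max (1 - y ^ (2:ℕ)) 0 = 0 then (if al γ = 0 then 1 else 0)
      else Real.exp (Real.log (max (1 - y ^ (2:ℕ)) 0) * al γ) := by
    funext y; rw [g1, Real.rpow_def_of_nonneg (le_max_right _ _)]
  rw [heq]
  exact Measurable.ite (hm (measurableSet_singleton 0)) measurable_const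
    (Real.measurable_exp.comp ((Real.measurable_log.comp hm).mul_const _))

lemma integrable_g1 (hγ : 1 < γ) (h3 : γ ≠ 3) : Integrable (g1 γ) := by
  have hind : g1 γ = (Icc (-1:ℝ) 1).indicator (g1 γ) := by
    funext y
    by_cases hy : y ∈ Icc (-1:ℝ) 1
    · rw [Set.indicator_of_mem hy]
    · rw [Set.indicator_of_notMem hy]
      exact g1_zero hγ h3 (by rw [mem_Icc, ← abs_le] at hy; exact le_of_lt (lt_of_not_ge hy))
  rw [hind, integrable_indicator_iff measurableSet_Icc]
  rcases le_or_gt 0 (al γ) with hα | hα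
  · apply Measure.integrableOn_of_bounded (measure_Icc_lt_top.ne)
      measurable_g1.aestronglyMeasurable (M := 1)
    refine ae_of_all _ fun y => ?_
    rw [Real.norm_eq_abs, abs_of_nonneg g1_nonneg]
    exact Real.rpow_le_one (le_max_right _ _) (max_le (by nlinarith [sq_nonneg y]) zero_le_one) hα
  · have hα1 : -1 < al γ := alpha_gt hγ
    have int1 : IntervalIntegrable (fun x : ℝ => x ^ al γ) volume 0 1 :=
      intervalIntegral.intervalIntegrable_rpow' hα1
    have intR : IntegrableOn (fun y : ℝ => (1 - y) ^ al γ) (Icc 0 1) := by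
      have h := int1.comp_sub_left 1
      rw [intervalIntegrable_iff] at h
      simp only [sub_zero, sub_self] at h
      have huIoc : Set.uIoc (1:ℝ) 0 = Ioc (0:ℝ) 1 := by
        rw [Set.uIoc_comm, Set.uIoc_of_le (by norm_num : (0:ℝ) ≤ 1)]
      rw [huIoc] at h
      exact h.congr_set_ae Ioc_ae_eq_Icc.symm
    have intL : IntegrableOn (fun y : ℝ => (1 + y) ^ al γ) (Icc (-1) 0) := by
      have h := int1.comp_add_left 1
      rw [intervalIntegrable_iff] at h
      simp only [zero_sub, sub_self] at h
      have huIoc : Set.uIoc (-1:ℝ) 0 = Ioc (-1:ℝ) 0 := Set.uIoc_of_le (by norm_num)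
      rw [huIoc] at h
      exact h.congr_set_ae Ioc_ae_eq_Icc.symm
    have intAbs : IntegrableOn (fun y : ℝ => (1 - |y|) ^ al γ) (Icc (-1) 1) := by
      have hsplit : Icc (-1:ℝ) 1 = Icc (-1) 0 ∪ Icc 0 1 :=
        (Set.Icc_union_Icc_eq_Icc (by norm_num) (by norm_num)).symm
      rw [hsplit]
      apply MeasureTheory.IntegrableOn.union
      · refine intL.congr_fun (fun y hy => ?_) measurableSet_Icc
        rw [abs_of_nonpos hy.2, sub_neg_eq_add]
      · refine intR.congr_fun (fun y hy => ?_) measurableSet_Icc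
        rw [abs_of_nonneg hy.1]
    refine Integrable.mono' intAbs measurable_g1.aestronglyMeasurable.restrict ?_
    refine (ae_restrict_iff' measurableSet_Icc).2 (ae_of_all _ fun y hy => ?_)
    rw [Real.norm_eq_abs, abs_of_nonneg g1_nonneg]
    rcases eq_or_lt_of_le (show |y| ≤ 1 by rw [abs_le]; exact ⟨hy.1, hy.2⟩) with he | hl
    · rw [g1_zero hγ h3 he.ge]
      exact Real.rpow_nonneg (by rw [he]; norm_num) _
    · have h0 : 0 < 1 - |y| := by linarith
      have h1 : 1 - |y| ≤ 1 - y ^ (2:ℕ) := by nlinarith [sq_abs y, abs_nonneg y]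
      rw [g1, max_eq_left (by linarith)]
      exact Real.rpow_le_rpow_of_nonpos h0 h1 hα.le

/-- Generic integrability of `f * g1` for `f` bounded on `[-1,1]`. -/
lemma integrable_mul_g1 (hγ : 1 < γ) (h3 : γ ≠ 3) {f : ℝ → ℝ} (hf : Measurable f) (C : ℝ)
    (hb : ∀ z, |z| ≤ 1 → |f z| ≤ C) : Integrable (fun z => f z * g1 γ z) := by
  refine ((integrable_g1 hγ h3).const_mul C).mono'
    ((hf.mul measurable_g1).aestronglyMeasurable) (ae_of_all _ fun z => ?_)
  rw [Real.norm_eq_abs, abs_mul, abs_of_nonneg g1_nonneg]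
  by_cases h : g1 γ z = 0
  · simp [h]
  · exact mul_le_mul_of_nonneg_right (hb z (g1_supp hγ h3 h)) g1_nonneg

lemma integrable_weight (hγ : 1 < γ) (h3 : γ ≠ 3) (a b : ℝ) :
    Integrable (fun z => |a - b * z| * g1 γ z) := by
  refine integrable_mul_g1 hγ h3 ((continuous_const.sub (continuous_mul_left b)).abs.measurable)
    (|a| + |b|) (fun z hz => ?_)
  rw [abs_abs]
  calc |a - b * z| ≤ |a| + |b * z| := abs_sub _ _
    _ ≤ |a| + |b| := by rw [abs_mul]; nlinarith [abs_nonneg b]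

/-- Scaling identity for the kernel. -/
lemma kernel_eq (hγ : 1 < γ) {ρ : ℝ} (hρ : 0 < ρ) (t : ℝ) :
    (max (ρ ^ (γ-1) - t ^ (2:ℕ)) 0) ^ (al γ)
      = ρ ^ ((γ-1) * al γ) * g1 γ (t / ρ ^ ((γ-1)/2)) := by
  have hc : (0:ℝ) < ρ ^ ((γ-1)/2) := Real.rpow_pos_of_pos hρ _
  have hcc : (ρ ^ ((γ-1)/2)) ^ (2:ℕ) = ρ ^ (γ-1) := by
    rw [← Real.rpow_natCast (ρ ^ ((γ-1)/2)) 2, ← Real.rpow_mul hρ.le]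
    congr 1
    push_cast
    ring
  have hp : (0:ℝ) < ρ ^ (γ-1) := Real.rpow_pos_of_pos hρ _
  have h1 : ρ ^ (γ-1) - t ^ (2:ℕ) = ρ ^ (γ-1) * (1 - (t / ρ ^ ((γ-1)/2)) ^ (2:ℕ)) := by
    rw [div_pow, hcc]
    field_simp
  have h2 : max (ρ ^ (γ-1) * (1 - (t / ρ ^ ((γ-1)/2)) ^ (2:ℕ))) 0
      = ρ ^ (γ-1) * max (1 - (t / ρ ^ ((γ-1)/2)) ^ (2:ℕ)) 0 := by
    rw [mul_max_of_nonneg _ _ hp.le, mul_zero]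
  rw [h1, h2, Real.mul_rpow hp.le (le_max_right _ _), ← Real.rpow_mul hρ.le]
  simp only [g1]

/-- The rescaled form of `etaCheck`. -/
lemma etaCheck_eq (hγ : 1 < γ) (h3 : γ ≠ 3) {ρ : ℝ} (hρ : 0 < ρ) (m : ℝ) :
    etaCheck γ ρ m = ρ * ∫ z, (1/2) * (m/ρ - ρ ^ ((γ-1)/2) * z) * |m/ρ - ρ ^ ((γ-1)/2) * z|
      * g1 γ z := by
  set c := ρ ^ ((γ-1)/2) with hcdef
  have hc : (0:ℝ) < c := Real.rpow_pos_of_pos hρ _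
  set k := ρ ^ ((γ-1) * al γ) with hkdef
  set Φ : ℝ → ℝ := fun t => (1/2) * (m/ρ - t) * |m/ρ - t|
    * (max (ρ ^ (γ-1) - t ^ (2:ℕ)) 0) ^ (al γ) with hΦ
  have step1 : etaCheck γ ρ m = ∫ s : ℝ, Φ (m/ρ - s) := by
    rw [etaCheck]
    congr 1
    funext s
    simp only [hΦ, sub_sub_cancel, al]
  have step2 : ∫ s : ℝ, Φ (m/ρ - s) = ∫ t, Φ t := integral_sub_left_eq_self Φ volume (m/ρ)
  have step3 : ∫ t, Φ t = c * ∫ z, Φ (c * z) := by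
    rw [MeasureTheory.Measure.integral_comp_mul_left Φ c, abs_of_pos (inv_pos.2 hc),
      smul_eq_mul, ← mul_assoc, mul_inv_cancel₀ hc.ne', one_mul]
  have step4 : ∀ z : ℝ, Φ (c * z)
      = k * ((1/2) * (m/ρ - c * z) * |m/ρ - c * z| * g1 γ z) := by
    intro z
    simp only [hΦ]
    rw [kernel_eq hγ hρ (c * z), ← hcdef, mul_div_cancel_left₀ _ hc.ne', ← hkdef]
    ring
  have step5 : ∫ z, Φ (c * z) = k * ∫ z, (1/2) * (m/ρ - c * z) * |m/ρ - c * z| * g1 γ z := by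
    rw [show (fun z => Φ (c * z))
        = fun z => k * ((1/2) * (m/ρ - c * z) * |m/ρ - c * z| * g1 γ z) from funext step4]
    exact integral_const_mul k _
  have hck : c * k = ρ := by
    have hne : γ - 1 ≠ 0 := ne_of_gt (by linarith : (0:ℝ) < γ - 1)
    rw [hcdef, hkdef, ← Real.rpow_add hρ, show (γ-1)/2 + (γ-1) * al γ = 1 by
      rw [al]; field_simp; ring, Real.rpow_one]
  rw [step1, step2, step3, step5, ← mul_assoc, hck]

/-- The derivative of `½ x |x|` is `|x|`. -/
lemma hasDerivAt_w (x : ℝ) : HasDerivAt (fun x : ℝ => (1/2) * x * |x|) |x| x := by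
  rcases lt_trichotomy x 0 with h | h | h
  · have hev : (fun x : ℝ => (1/2) * x * (-x)) =ᶠ[𝓝 x] fun x : ℝ => (1/2) * x * |x| := by
      filter_upwards [Iio_mem_nhds h] with t ht
      rw [abs_of_neg ht]
    have hd : HasDerivAt (fun x : ℝ => (1/2) * x * (-x)) (-x) x := by
      have h1 : HasDerivAt (fun x : ℝ => x) 1 x := hasDerivAt_id x
      have h2 : HasDerivAt (fun y : ℝ => (1/2) * y * (-y)) ((1/2) * 1 * (-x) + (1/2) * x * (-1)) x :=
        (h1.const_mul (1/2 : ℝ)).mul h1.neg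
      convert h2 using 1
      ring
    rw [show |x| = -x from abs_of_neg h]
    exact hd.congr_of_eventuallyEq hev.symm
  · subst h
    rw [hasDerivAt_iff_tendsto_slope]
    have hev : (fun t : ℝ => (1/2) * |t|)
        =ᶠ[𝓝[≠] (0:ℝ)] slope (fun x : ℝ => (1/2) * x * |x|) 0 := by
      filter_upwards [self_mem_nhdsWithin] with t ht
      rw [slope_def_field]
      simp only [mul_zero, abs_zero, zero_mul]
      rw [sub_zero, sub_zero, eq_div_iff ht]
      ring
    have htend : Filter.Tendsto (fun t : ℝ => (1/2) * |t|) (𝓝[≠] (0:ℝ)) (𝓝 |(0:ℝ)|) := by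
      have h2 := (continuous_abs.tendsto (0:ℝ)).const_mul (1/2 : ℝ)
      simp only [abs_zero, mul_zero] at h2
      rw [abs_zero]
      exact h2.mono_left nhdsWithin_le_nhds
    exact htend.congr' hev
  · have hev : (fun x : ℝ => (1/2) * x * x) =ᶠ[𝓝 x] fun x : ℝ => (1/2) * x * |x| := by
      filter_upwards [Ioi_mem_nhds h] with t ht
      rw [abs_of_pos ht]
    have hd : HasDerivAt (fun x : ℝ => (1/2) * x * x) x x := by
      have h1 : HasDerivAt (fun x : ℝ => x) 1 x := hasDerivAt_id x
      have h2 : HasDerivAt (fun y : ℝ => (1/2) * y * y) ((1/2) * 1 * x + (1/2) * x * 1) x :=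
        (h1.const_mul (1/2 : ℝ)).mul h1
      convert h2 using 1
      ring
    rw [show |x| = x from abs_of_pos h]
    exact hd.congr_of_eventuallyEq hev.symm

/-- Explicit formula for `etaCheckM`. -/
lemma etaCheckM_eq (hγ : 1 < γ) (h3 : γ ≠ 3) {ρ : ℝ} (hρ : 0 < ρ) (m : ℝ) :
    etaCheckM γ ρ m = ∫ z, |m/ρ - ρ ^ ((γ-1)/2) * z| * g1 γ z := by
  set c := ρ ^ ((γ-1)/2) with hcdef
  have hc : (0:ℝ) < c := Real.rpow_pos_of_pos hρ _
  set F : ℝ → ℝ → ℝ := fun y z => (1/2) * (y/ρ - c * z) * |y/ρ - c * z| * g1 γ z with hF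
  set F' : ℝ → ℝ → ℝ := fun y z => |y/ρ - c * z| * (1/ρ) * g1 γ z with hF'
  have heq : (fun y => etaCheck γ ρ y) = fun y => ρ * ∫ z, F y z :=
    funext fun y => etaCheck_eq hγ h3 hρ y
  have hmain : HasDerivAt (fun y => ∫ z, F y z) (∫ z, F' m z) m := by
    have hFmeas : ∀ᶠ y in 𝓝 m, AEStronglyMeasurable (F y) (volume : Measure ℝ) :=
      Filter.Eventually.of_forall fun y =>
        (((continuous_const.mul (continuous_const.sub (continuous_mul_left c))).mul
          (continuous_const.sub (continuous_mul_left c)).abs).measurable.mul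
          measurable_g1).aestronglyMeasurable
    have hFint : Integrable (F m) (volume : Measure ℝ) := by
      refine integrable_mul_g1 hγ h3 (f := fun z => (1/2) * (m/ρ - c * z) * |m/ρ - c * z|)
        (((continuous_const.mul (continuous_const.sub (continuous_mul_left c))).mul
          (continuous_const.sub (continuous_mul_left c)).abs).measurable)
        ((1/2) * (|m/ρ| + c) ^ 2) (fun z hz => ?_)
      have h1 : |m/ρ - c * z| ≤ |m/ρ| + c := by
        calc |m/ρ - c * z| ≤ |m/ρ| + |c * z| := abs_sub _ _
          _ ≤ |m/ρ| + c := by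
            rw [abs_mul, abs_of_pos hc]
            nlinarith [abs_nonneg z]
      rw [abs_mul, abs_mul, abs_abs]
      have h12 : |(1:ℝ)/2| = 1/2 := by norm_num
      rw [h12]
      nlinarith [abs_nonneg (m/ρ - c * z), abs_nonneg (m/ρ)]
    have hF'meas : AEStronglyMeasurable (F' m) (volume : Measure ℝ) :=
      (((continuous_const.sub (continuous_mul_left c)).abs.mul
        continuous_const).measurable.mul measurable_g1).aestronglyMeasurable
    have hbound : ∀ᵐ z : ℝ ∂(volume : Measure ℝ), ∀ y ∈ Metric.ball m 1,
        ‖F' y z‖ ≤ (((|m|+1)/ρ + c) * (1/ρ)) * g1 γ z := by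
      refine ae_of_all _ fun z y hy => ?_
      have hnn : 0 ≤ F' y z := by
        simp only [hF']
        exact mul_nonneg (mul_nonneg (abs_nonneg _) (by positivity)) g1_nonneg
      rw [Real.norm_eq_abs, abs_of_nonneg hnn]
      simp only [hF']
      by_cases hg : g1 γ z = 0
      · rw [hg, mul_zero, mul_zero]
      · have hz := g1_supp hγ h3 hg
        have hy1 : |y| ≤ |m| + 1 := by
          have hd := Metric.mem_ball.1 hy
          rw [Real.dist_eq] at hd
          calc |y| = |m + (y - m)| := by ring_nf
            _ ≤ |m| + |y - m| := abs_add_le _ _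
            _ ≤ |m| + 1 := by linarith
        have h1 : |y/ρ - c * z| ≤ (|m|+1)/ρ + c := by
          calc |y/ρ - c * z| ≤ |y/ρ| + |c * z| := abs_sub _ _
            _ = |y|/ρ + c * |z| := by
              rw [abs_div, abs_of_pos hρ, abs_mul, abs_of_pos hc]
            _ ≤ (|m|+1)/ρ + c := by
              have h0 : |y|/ρ ≤ (|m|+1)/ρ := by gcongr
              nlinarith [abs_nonneg z]
        exact mul_le_mul_of_nonneg_right
          (mul_le_mul_of_nonneg_right h1 (by positivity : (0:ℝ) ≤ 1/ρ)) g1_nonneg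
    have hbint : Integrable (fun z => (((|m|+1)/ρ + c) * (1/ρ)) * g1 γ z)
        (volume : Measure ℝ) := (integrable_g1 hγ h3).const_mul _
    have hdiff : ∀ᵐ z : ℝ ∂(volume : Measure ℝ), ∀ y ∈ Metric.ball m 1,
        HasDerivAt (fun y => F y z) (F' y z) y := by
      refine ae_of_all _ fun z y _ => ?_
      simp only [hF, hF']
      have hinner : HasDerivAt (fun y : ℝ => y/ρ - c * z) (1/ρ) y := by
        simpa using ((hasDerivAt_id y).div_const ρ).sub_const (c * z)
      have hw := hasDerivAt_w (y/ρ - c * z)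
      have hcomp := HasDerivAt.comp y hw hinner
      simpa [Function.comp] using hcomp.mul_const (g1 γ z)
    exact (hasDerivAt_integral_of_dominated_loc_of_deriv_le (Metric.ball_mem_nhds m one_pos) hFmeas hFint hF'meas
      hbound hbint hdiff).2
  rw [etaCheckM, heq, (hmain.const_mul ρ).deriv]
  rw [show (fun z => F' m z) = fun z => (1/ρ) * (|m/ρ - c * z| * g1 γ z) from
    funext fun z => by simp only [hF']; ring]
  rw [integral_const_mul, ← mul_assoc, mul_one_div, div_self hρ.ne', one_mul]

/-- Core Lipschitz estimate. -/
lemma key_lip (hγ : 1 < γ) (h3 : γ ≠ 3) (v1 v2 r1 r2 : ℝ) :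
    |(∫ z, |v1 - r1 * z| * g1 γ z) - ∫ z, |v2 - r2 * z| * g1 γ z|
      ≤ (|v1 - v2| + |r1 - r2|) * ∫ z, g1 γ z := by
  rw [← integral_sub (integrable_weight hγ h3 v1 r1) (integrable_weight hγ h3 v2 r2),
    ← integral_const_mul, ← Real.norm_eq_abs]
  refine norm_integral_le_of_norm_le ((integrable_g1 hγ h3).const_mul _)
    (ae_of_all _ fun z => ?_)
  rw [Real.norm_eq_abs, ← sub_mul, abs_mul, abs_of_nonneg g1_nonneg]
  by_cases hg : g1 γ z = 0
  · rw [hg, mul_zero, mul_zero]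
  · have hz := g1_supp hγ h3 hg
    refine mul_le_mul_of_nonneg_right ?_ g1_nonneg
    calc abs (|v1 - r1 * z| - |v2 - r2 * z|)
        ≤ |(v1 - r1 * z) - (v2 - r2 * z)| := abs_abs_sub_abs_le_abs_sub _ _
      _ = |(v1 - v2) - (r1 - r2) * z| := by congr 1; ring
      _ ≤ |v1 - v2| + |(r1 - r2) * z| := abs_sub _ _
      _ ≤ |v1 - v2| + |r1 - r2| := by
          rw [abs_mul]; nlinarith [abs_nonneg (r1 - r2)]

/-- Derivative bound from a local Lipschitz-type estimate. -/
lemma abs_deriv_le {f g : ℝ → ℝ} {x K g' : ℝ} (hK : 0 ≤ K) (hg : HasDerivAt g g' x)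
    (h : ∀ᶠ y in 𝓝 x, |f y - f x| ≤ K * |g y - g x|) :
    |deriv f x| ≤ K * |g'| := by
  by_cases hd : DifferentiableAt ℝ f x
  · have hf := hd.hasDerivAt
    rw [hasDerivAt_iff_tendsto_slope] at hf hg
    have h1 : Filter.Tendsto (fun y => |slope f x y|) (𝓝[≠] x) (𝓝 |deriv f x|) :=
      (continuous_abs.tendsto _).comp hf
    have h2 : Filter.Tendsto (fun y => K * |slope g x y|) (𝓝[≠] x) (𝓝 (K * |g'|)) :=
      ((continuous_abs.tendsto _).comp hg).const_mul K
    refine le_of_tendsto_of_tendsto h1 h2 ?_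
    have h' : ∀ᶠ y in 𝓝[≠] x, |f y - f x| ≤ K * |g y - g x| :=
      h.filter_mono nhdsWithin_le_nhds
    filter_upwards [h', self_mem_nhdsWithin] with y hy hyx
    have hpos : (0:ℝ) < |y - x| := abs_pos.2 (sub_ne_zero.2 hyx)
    show abs ((fun y => slope f x y) y) ≤ K * abs ((fun y => slope g x y) y)
    simp only
    calc |slope f x y| = |f y - f x| / |y - x| := by
          rw [slope_def_field, abs_div]
      _ ≤ (K * |g y - g x|) / |y - x| := by gcongr
      _ = K * |slope g x y| := by
          rw [slope_def_field, abs_div, mul_div_assoc]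
  · rw [deriv_zero_of_not_differentiableAt hd, abs_zero]
    positivity

end HB

/-- there is `M > 0` depending only on `γ` such that for every `ρ̄ > 0`,
`|∂_ρ H| ≤ Mρ^{θ−1}` and `|∂_u H| ≤ M` for all `ρ > 0`, `u ∈ ℝ`, where `θ = (γ−1)/2`. -/
theorem H_derivative_bounds (γ : ℝ) (hγ : 1 < γ) :
    ∃ M : ℝ, 0 < M ∧ ∀ ρbar : ℝ, 0 < ρbar → ∀ ρ : ℝ, 0 < ρ → ∀ u : ℝ,
      |deriv (fun x => Hfun γ ρbar x u) ρ| ≤ M * ρ ^ ((γ - 1) / 2 - 1) ∧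
      |deriv (fun v => Hfun γ ρbar ρ v) u| ≤ M := by
  by_cases h3 : γ = 3
  · subst h3
    refine ⟨1, one_pos, fun ρbar hρbar ρ hρ u => ?_⟩
    have hnint : ¬ Integrable (fun s : ℝ => (1/2) * s * |s|) (volume : Measure ℝ) := by
      intro hI
      have h2 : IntegrableOn (fun s : ℝ => (1/2) * s * |s|) (Ici (1:ℝ)) := hI.integrableOn
      have h4 : Integrable (fun _ : ℝ => (1:ℝ)/2) (volume.restrict (Ici (1:ℝ))) := by
        refine MeasureTheory.Integrable.mono h2 aestronglyMeasurable_const ?_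
        refine (ae_restrict_iff' measurableSet_Ici).2 (ae_of_all _ fun s hs => ?_)
        rw [Real.norm_eq_abs, Real.norm_eq_abs, abs_mul, abs_mul, abs_abs]
        have hs1 : (1:ℝ) ≤ s := hs
        rw [abs_of_nonneg (by linarith : (0:ℝ) ≤ s),
          abs_of_nonneg (by norm_num : (0:ℝ) ≤ (1:ℝ)/2)]
        nlinarith
      rw [integrable_const_iff] at h4
      rcases h4 with h | h
      · norm_num at h
      · have h := h.measure_univ_lt_top
        rw [Measure.restrict_apply_univ, Real.volume_Ici] at h
        exact lt_irrefl _ h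
    have hzero : ∀ ρ' m' : ℝ, etaCheck 3 ρ' m' = 0 := by
      intro ρ' m'
      have heq : etaCheck 3 ρ' m' = ∫ s : ℝ, (1/2) * s * |s| := by
        rw [etaCheck]
        congr 1
        funext s
        norm_num
      rw [heq]
      exact integral_undef hnint
    have hM0 : ∀ ρ' m' : ℝ, etaCheckM 3 ρ' m' = 0 := by
      intro ρ' m'
      rw [etaCheckM, show (fun y => etaCheck 3 ρ' y) = fun _ : ℝ => (0:ℝ) from
        funext fun y => hzero ρ' y, deriv_const]
    constructor
    · rw [show (fun x => Hfun 3 ρbar x u) = fun _ : ℝ => (0:ℝ) from funext fun x => by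
        rw [Hfun, hM0, hM0, sub_self], deriv_const, abs_zero, one_mul]
      exact (Real.rpow_pos_of_pos hρ _).le
    · rw [show (fun v => Hfun 3 ρbar ρ v) = fun _ : ℝ => (0:ℝ) from funext fun v => by
        rw [Hfun, hM0, hM0, sub_self], deriv_const, abs_zero]
      norm_num
  · have hθ : (0:ℝ) < (γ-1)/2 := by linarith
    have hA0 : (0:ℝ) ≤ ∫ z, HB.g1 γ z := integral_nonneg fun z => HB.g1_nonneg
    set A := ∫ z, HB.g1 γ z with hA
    refine ⟨A * ((γ-1)/2) + A + 1, by nlinarith [mul_nonneg hA0 hθ.le], ?_⟩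
    intro ρbar hρbar ρ hρ u
    have hform : ∀ x : ℝ, 0 < x → ∀ v : ℝ,
        Hfun γ ρbar x v
          = (∫ z, |v - x ^ ((γ-1)/2) * z| * HB.g1 γ z) - etaCheckM γ ρbar 0 := by
      intro x hx v
      rw [Hfun, HB.etaCheckM_eq hγ h3 hx]
      congr 2
      funext z
      rw [mul_comm x v, mul_div_assoc, div_self hx.ne', mul_one]
    constructor
    · have hg : HasDerivAt (fun x : ℝ => x ^ ((γ-1)/2))
          (((γ-1)/2) * ρ ^ ((γ-1)/2 - 1)) ρ :=
        Real.hasDerivAt_rpow_const (Or.inl hρ.ne')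
      have hev : ∀ᶠ y in nhds ρ,
          |(fun x => Hfun γ ρbar x u) y - (fun x => Hfun γ ρbar x u) ρ|
            ≤ A * |(fun x : ℝ => x ^ ((γ-1)/2)) y - (fun x : ℝ => x ^ ((γ-1)/2)) ρ| := by
        filter_upwards [eventually_gt_nhds hρ] with y hy
        show |Hfun γ ρbar y u - Hfun γ ρbar ρ u|
          ≤ A * |y ^ ((γ-1)/2) - ρ ^ ((γ-1)/2)|
        rw [hform y hy u, hform ρ hρ u,
          show ((∫ z, |u - y ^ ((γ-1)/2) * z| * HB.g1 γ z) - etaCheckM γ ρbar 0)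
            - ((∫ z, |u - ρ ^ ((γ-1)/2) * z| * HB.g1 γ z) - etaCheckM γ ρbar 0)
            = (∫ z, |u - y ^ ((γ-1)/2) * z| * HB.g1 γ z)
              - ∫ z, |u - ρ ^ ((γ-1)/2) * z| * HB.g1 γ z by ring]
        calc |(∫ z, |u - y ^ ((γ-1)/2) * z| * HB.g1 γ z)
              - ∫ z, |u - ρ ^ ((γ-1)/2) * z| * HB.g1 γ z|
            ≤ (|u - u| + |y ^ ((γ-1)/2) - ρ ^ ((γ-1)/2)|) * A :=
              HB.key_lip hγ h3 u u _ _
          _ = A * |y ^ ((γ-1)/2) - ρ ^ ((γ-1)/2)| := by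
              rw [sub_self, abs_zero, zero_add]; ring
      refine le_trans (HB.abs_deriv_le hA0 hg hev) ?_
      rw [abs_mul, abs_of_pos hθ, abs_of_pos (Real.rpow_pos_of_pos hρ _)]
      have hpw : (0:ℝ) < ρ ^ ((γ-1)/2 - 1) := Real.rpow_pos_of_pos hρ _
      nlinarith [mul_nonneg hA0 hθ.le]
    · have hg : HasDerivAt (fun v : ℝ => v) 1 u := hasDerivAt_id u
      have hev : ∀ᶠ v in nhds u,
          |(fun v => Hfun γ ρbar ρ v) v - (fun v => Hfun γ ρbar ρ v) u|
            ≤ A * |(fun v : ℝ => v) v - (fun v : ℝ => v) u| := by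
        refine Filter.Eventually.of_forall fun v => ?_
        show |Hfun γ ρbar ρ v - Hfun γ ρbar ρ u| ≤ A * |v - u|
        rw [hform ρ hρ v, hform ρ hρ u,
          show ((∫ z, |v - ρ ^ ((γ-1)/2) * z| * HB.g1 γ z) - etaCheckM γ ρbar 0)
            - ((∫ z, |u - ρ ^ ((γ-1)/2) * z| * HB.g1 γ z) - etaCheckM γ ρbar 0)
            = (∫ z, |v - ρ ^ ((γ-1)/2) * z| * HB.g1 γ z)
              - ∫ z, |u - ρ ^ ((γ-1)/2) * z| * HB.g1 γ z by ring]
        calc |(∫ z, |v - ρ ^ ((γ-1)/2) * z| * HB.g1 γ z)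
              - ∫ z, |u - ρ ^ ((γ-1)/2) * z| * HB.g1 γ z|
            ≤ (|v - u| + |ρ ^ ((γ-1)/2) - ρ ^ ((γ-1)/2)|) * A :=
              HB.key_lip hγ h3 v u _ _
          _ = A * |v - u| := by rw [sub_self, abs_zero, add_zero]; ring
      have hd := HB.abs_deriv_le hA0 hg hev
      rw [abs_one, mul_one] at hd
      refine hd.trans ?_
      nlinarith [mul_nonneg hA0 hθ.le]
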